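/- arXiv:1109.5280 — 2 statements merged into one kernel-verified Lean document; each statement's English description precedes it below -/
import Mathlib

section
/- If θ < d_c, then the function c(g) defined by c(g) = μ·(ℓ(g) - d_c + √((ℓ(g) - d_c)² + 4(d_c - θ)ℓ(g))) / (2(d_c - θ)ℓ(g)) is strictly increasing on (0, ∞). -/
open Set

private lemma sqrt_gt_aux (k dc x : ℝ) (hθ : 0 < dc - k) (hk : 0 < k) (hx : 0 < x) :
    x - dc + 2*k < Real.sqrt ((x - dc)^2 + 4*k*x) := by
  have hD : (x - dc + 2*k)^2 < (x - dc)^2 + 4*k*x := by nlinarith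
  rcases lt_or_ge (x - dc + 2*k) 0 with h | h
  · exact h.trans_le (Real.sqrt_nonneg _)
  · exact (Real.lt_sqrt h).mpr hD

private lemma den_pos (k dc x : ℝ) (hθ : 0 < dc - k) (hk : 0 < k) (hx : 0 < x) :
    0 < Real.sqrt ((x - dc)^2 + 4*k*x) + dc - x := by
  have := sqrt_gt_aux k dc x hθ hk hx
  linarith

private lemma c_rep (μ k dc x : ℝ) (hμ : 0 < μ) (hθ : 0 < dc - k) (hk : 0 < k) (hx : 0 < x) :
    μ * (x - dc + Real.sqrt ((x - dc)^2 + 4*k*x)) / (2*k*x)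
      = 2*μ / (Real.sqrt ((x - dc)^2 + 4*k*x) + dc - x) := by
  have hden := den_pos k dc x hθ hk hx
  have hsq : Real.sqrt ((x - dc)^2 + 4*k*x) ^ 2 = (x - dc)^2 + 4*k*x := by
    apply Real.sq_sqrt; nlinarith
  rw [div_eq_div_iff (by positivity) (by linarith)]
  nlinarith [hsq]

theorem stmt_4 (α μ ν θ db dc : ℝ) (hα : 0 < α) (hμ : 0 < μ) (hν : 0 < ν)
    (hθ : 0 < θ) (hdb : 0 < db) (hdc : 0 < dc) (hlt : θ < dc)
    (ℓ c : ℝ → ℝ) (hℓ : ∀ g, ℓ g = α * μ / (db + ν) * g)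
    (hc : ∀ g, c g = μ * (ℓ g - dc + Real.sqrt ((ℓ g - dc) ^ 2 + 4 * (dc - θ) * ℓ g)) /
      (2 * (dc - θ) * ℓ g)) :
    StrictMonoOn c (Ioi 0) := by
  intro a ha b hb hab
  set k := dc - θ with hkdef
  have hk : 0 < k := sub_pos.mpr hlt
  have hθk : 0 < dc - k := by simp [hkdef]; linarith
  have hcoef : 0 < α * μ / (db + ν) := by positivity
  have hxa : 0 < ℓ a := by rw [hℓ]; exact mul_pos hcoef (mem_Ioi.mp ha)
  have hxb : 0 < ℓ b := by rw [hℓ]; exact mul_pos hcoef (mem_Ioi.mp hb)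
  have hxab : ℓ a < ℓ b := by
    rw [hℓ, hℓ]; exact mul_lt_mul_of_pos_left hab hcoef
  have hca : c a = 2*μ / (Real.sqrt ((ℓ a - dc)^2 + 4*k*(ℓ a)) + dc - ℓ a) := by
    rw [hc a, ← c_rep μ k dc (ℓ a) hμ hθk hk hxa]
  have hcb : c b = 2*μ / (Real.sqrt ((ℓ b - dc)^2 + 4*k*(ℓ b)) + dc - ℓ b) := by
    rw [hc b, ← c_rep μ k dc (ℓ b) hμ hθk hk hxb]
  have hdena := den_pos k dc (ℓ a) hθk hk hxa
  have hdenb := den_pos k dc (ℓ b) hθk hk hxb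
  have hsqa : Real.sqrt ((ℓ a - dc)^2 + 4*k*(ℓ a)) ^ 2 = (ℓ a - dc)^2 + 4*k*(ℓ a) := by
    apply Real.sq_sqrt; nlinarith
  have hgta := sqrt_gt_aux k dc (ℓ a) hθk hk hxa
  have key : Real.sqrt ((ℓ b - dc)^2 + 4*k*(ℓ b))
      < Real.sqrt ((ℓ a - dc)^2 + 4*k*(ℓ a)) + (ℓ b - ℓ a) := by
    have hpos : 0 < Real.sqrt ((ℓ a - dc)^2 + 4*k*(ℓ a)) + (ℓ b - ℓ a) := by
      have := Real.sqrt_nonneg ((ℓ a - dc)^2 + 4*k*(ℓ a)); linarith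
    rw [Real.sqrt_lt' hpos]
    nlinarith [hsqa, hgta, hxab]
  rw [hca, hcb]
  exact div_lt_div_of_pos_left (by linarith) hdenb (by linarith)
end

section
/- If θ > d_c, then the discriminant D(g) = μ²((ℓ(g) - d_c)² - 4(θ - d_c)ℓ(g)) is nonnegative for g ∈ (0, g*], where g* = ((d_b+ν)/(αμ))·(√θ - √(θ - d_c))², and g* is the smallest positive zero of D. -/
open Set

theorem stmt_6 (α μ ν θ db dc : ℝ) (hα : 0 < α) (hμ : 0 < μ) (hν : 0 < ν)
    (hdc : 0 < dc) (hlt : dc < θ)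
    (ℓ D : ℝ → ℝ) (hℓ : ∀ g, ℓ g = α * μ / (db + ν) * g)
    (hD : ∀ g, D g = μ ^ 2 * ((ℓ g - dc) ^ 2 - 4 * (θ - dc) * ℓ g))
    (gs : ℝ) (hgs : gs = (db + ν) / (α * μ) * (Real.sqrt θ - Real.sqrt (θ - dc)) ^ 2)
    (hdb : 0 < db) :
    (∀ g ∈ Ioc 0 gs, 0 ≤ D g) ∧ D gs = 0 ∧ ∀ g, 0 < g → D g = 0 → gs ≤ g := by
  set a := Real.sqrt θ with ha
  set b := Real.sqrt (θ - dc) with hb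
  have ha2 : a ^ 2 = θ := Real.sq_sqrt (by linarith)
  have hb2 : b ^ 2 = θ - dc := Real.sq_sqrt (by linarith)
  have ha0 : 0 ≤ a := Real.sqrt_nonneg _
  have hb0 : 0 ≤ b := Real.sqrt_nonneg _
  have hab : b < a := by nlinarith
  have hden : 0 < db + ν := by linarith
  have hc : 0 < α * μ / (db + ν) := by positivity
  have hℓgs : ℓ gs = (a - b) ^ 2 := by
    rw [hℓ, hgs]; field_simp
  have hfact : ∀ x : ℝ, (x - dc) ^ 2 - 4 * (θ - dc) * x
      = (x - (a - b) ^ 2) * (x - (a + b) ^ 2) := by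
    intro x
    have h1 : dc = a ^ 2 - b ^ 2 := by linarith
    have h2 : θ - dc = b ^ 2 := by linarith
    rw [h1, ← ha2]; ring
  have hkey : ∀ g, D g = μ ^ 2 * ((ℓ g - (a - b) ^ 2) * (ℓ g - (a + b) ^ 2)) := by
    intro g; rw [hD, hfact]
  have hle : (a - b) ^ 2 ≤ (a + b) ^ 2 := by nlinarith
  refine ⟨?_, ?_, ?_⟩
  · rintro g ⟨hg0, hgle⟩
    have h1 : ℓ g ≤ (a - b) ^ 2 := by
      rw [hℓ]
      calc α * μ / (db + ν) * g ≤ α * μ / (db + ν) * gs := by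
            exact mul_le_mul_of_nonneg_left hgle hc.le
        _ = (a - b) ^ 2 := by rw [← hℓ, hℓgs]
    have h2 : ℓ g ≤ (a + b) ^ 2 := le_trans h1 hle
    rw [hkey]
    have h3 : 0 ≤ (ℓ g - (a - b) ^ 2) * (ℓ g - (a + b) ^ 2) := by nlinarith
    exact mul_nonneg (sq_nonneg μ) h3
  · rw [hkey, hℓgs]; ring
  · intro g hg0 hDg
    rw [hkey] at hDg
    have hμ2 : μ ^ 2 ≠ 0 := by positivity
    have h := (mul_eq_zero.mp hDg).resolve_left hμ2
    have hge : (a - b) ^ 2 ≤ ℓ g := by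
      rcases mul_eq_zero.mp h with h' | h'
      · nlinarith
      · nlinarith
    rw [hℓ, div_mul_eq_mul_div, le_div_iff₀ hden] at hge
    rw [hgs, div_mul_eq_mul_div, div_le_iff₀ (by positivity)]
    nlinarith
end
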